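/- (Distance lower bound from a gradient bound) Let n ≥ 1, let F be a Minkowski norm on ℝⁿ with dual norm F⁰, let K ⊂ ℝⁿ be a convex set, let λ > 0, and let u : K → ℝ be a C¹ function (continuously differentiable on a neighborhood of K, or differentiable along segments in K) satisfying F(∇u(x))² ≤ λ (1 − u(x)²) for all x ∈ K. If x₁, x₂ ∈ K satisfy u(x₁) = −1 and u(x₂) = 1, then F⁰(x₂ − x₁) ≥ π/√λ. -/

import Mathlib

open Real MeasureTheory
open scoped RealInnerProductSpace

noncomputable section

/-- A Minkowski norm on ℝⁿ: nonnegative, convex, C¹ away from the origin, even,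
positively 1-homogeneous, and positive away from the origin. -/
structure IsMinkowskiNorm {n : ℕ} (F : EuclideanSpace ℝ (Fin n) → ℝ) : Prop where
  nonneg : ∀ ξ, 0 ≤ F ξ
  convexOn : ConvexOn ℝ Set.univ F
  contDiffOn : ContDiffOn ℝ 1 F {(0 : EuclideanSpace ℝ (Fin n))}ᶜ
  even : ∀ ξ, F (-ξ) = F ξ
  homog : ∀ (t : ℝ) (ξ : EuclideanSpace ℝ (Fin n)), F (t • ξ) = |t| * F ξ
  pos : ∀ ξ, ξ ≠ 0 → 0 < F ξ

/-- The dual norm `F⁰(x) = sup_{ξ ≠ 0} ⟨x, ξ⟩ / F(ξ)`. -/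
def dualNorm {n : ℕ} (F : EuclideanSpace ℝ (Fin n) → ℝ)
    (x : EuclideanSpace ℝ (Fin n)) : ℝ :=
  sSup {r : ℝ | ∃ ξ : EuclideanSpace ℝ (Fin n), ξ ≠ 0 ∧ r = ⟪x, ξ⟫ / F ξ}

section Aux

variable {n : ℕ}

lemma minkowski_F_zero {F : EuclideanSpace ℝ (Fin n) → ℝ} (hF : IsMinkowskiNorm F) :
    F 0 = 0 := by
  have h := hF.homog 0 0
  simpa using h

lemma minkowski_lower (hn : 1 ≤ n) {F : EuclideanSpace ℝ (Fin n) → ℝ}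
    (hF : IsMinkowskiNorm F) : ∃ c > 0, ∀ ξ, c * ‖ξ‖ ≤ F ξ := by
  have hnt : Nontrivial (EuclideanSpace ℝ (Fin n)) := by
    refine ⟨EuclideanSpace.single ⟨0, hn⟩ (1 : ℝ), 0, ?_⟩
    intro h
    have := congrArg (fun f => f ⟨0, hn⟩) h
    simp [EuclideanSpace.single] at this
  have hsph : (Metric.sphere (0 : EuclideanSpace ℝ (Fin n)) 1).Nonempty :=
    NormedSpace.sphere_nonempty.2 zero_le_one
  have hcont : ContinuousOn F (Metric.sphere (0 : EuclideanSpace ℝ (Fin n)) 1) := by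
    refine hF.contDiffOn.continuousOn.mono ?_
    intro x hx
    simp only [Metric.mem_sphere, dist_zero_right] at hx
    simp only [Set.mem_compl_iff, Set.mem_singleton_iff]
    intro h
    rw [h] at hx; simp at hx
  obtain ⟨ξ₀, hξ₀, hmin⟩ := (isCompact_sphere (0 : EuclideanSpace ℝ (Fin n)) 1).exists_isMinOn
    hsph hcont
  have hξ₀ne : ξ₀ ≠ 0 := by
    simp only [Metric.mem_sphere, dist_zero_right] at hξ₀
    intro h; rw [h] at hξ₀; simp at hξ₀
  refine ⟨F ξ₀, hF.pos ξ₀ hξ₀ne, ?_⟩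
  intro ξ
  rcases eq_or_ne ξ 0 with rfl | hξ
  · simp [minkowski_F_zero hF]
  · have hnorm : (0:ℝ) < ‖ξ‖ := norm_pos_iff.2 hξ
    have hunit : (‖ξ‖⁻¹ • ξ) ∈ Metric.sphere (0 : EuclideanSpace ℝ (Fin n)) 1 := by
      simp [norm_smul, abs_of_pos (inv_pos.2 hnorm), inv_mul_cancel₀ hnorm.ne']
    have h1 : F ξ₀ ≤ F (‖ξ‖⁻¹ • ξ) := hmin hunit
    have h2 : F (‖ξ‖⁻¹ • ξ) = ‖ξ‖⁻¹ * F ξ := by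
      rw [hF.homog]; rw [abs_of_pos (inv_pos.2 hnorm)]
    rw [h2] at h1
    have := mul_le_mul_of_nonneg_left h1 hnorm.le
    calc F ξ₀ * ‖ξ‖ = ‖ξ‖ * F ξ₀ := by ring
    _ ≤ ‖ξ‖ * (‖ξ‖⁻¹ * F ξ) := this
    _ = F ξ := by field_simp

lemma dualNorm_bddAbove (hn : 1 ≤ n) {F : EuclideanSpace ℝ (Fin n) → ℝ}
    (hF : IsMinkowskiNorm F) (x : EuclideanSpace ℝ (Fin n)) :
    BddAbove {r : ℝ | ∃ ξ : EuclideanSpace ℝ (Fin n), ξ ≠ 0 ∧ r = ⟪x, ξ⟫ / F ξ} := by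
  obtain ⟨c, hc, hlow⟩ := minkowski_lower hn hF
  refine ⟨‖x‖ / c, ?_⟩
  rintro r ⟨ξ, hξ, rfl⟩
  have hFpos : 0 < F ξ := hF.pos ξ hξ
  have hnξ : 0 < ‖ξ‖ := norm_pos_iff.2 hξ
  have h1 : ⟪x, ξ⟫ ≤ ‖x‖ * ‖ξ‖ := real_inner_le_norm x ξ
  rw [div_le_div_iff₀ hFpos hc]
  calc ⟪x, ξ⟫ * c ≤ (‖x‖ * ‖ξ‖) * c := by nlinarith
  _ = ‖x‖ * (c * ‖ξ‖) := by ring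
  _ ≤ ‖x‖ * F ξ := by
      exact mul_le_mul_of_nonneg_left (hlow ξ) (norm_nonneg x)

lemma dualNorm_CS (hn : 1 ≤ n) {F : EuclideanSpace ℝ (Fin n) → ℝ}
    (hF : IsMinkowskiNorm F) (x ξ : EuclideanSpace ℝ (Fin n)) :
    ⟪x, ξ⟫ ≤ dualNorm F x * F ξ := by
  rcases eq_or_ne ξ 0 with rfl | hξ
  · simp [minkowski_F_zero hF]
  · have h1 : ⟪x, ξ⟫ / F ξ ≤ dualNorm F x :=
      le_csSup (dualNorm_bddAbove hn hF x) ⟨ξ, hξ, rfl⟩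
    have hFpos : 0 < F ξ := hF.pos ξ hξ
    calc ⟪x, ξ⟫ = (⟪x, ξ⟫ / F ξ) * F ξ := by field_simp
    _ ≤ dualNorm F x * F ξ := mul_le_mul_of_nonneg_right h1 hFpos.le

lemma dualNorm_pos (hn : 1 ≤ n) {F : EuclideanSpace ℝ (Fin n) → ℝ}
    (hF : IsMinkowskiNorm F) {x : EuclideanSpace ℝ (Fin n)} (hx : x ≠ 0) :
    0 < dualNorm F x := by
  have h1 : ⟪x, x⟫ / F x ≤ dualNorm F x :=
    le_csSup (dualNorm_bddAbove hn hF x) ⟨x, hx, rfl⟩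
  have hxx : 0 < ⟪x, x⟫ := by
    rw [real_inner_self_eq_norm_sq]
    exact pow_pos (norm_pos_iff.2 hx) 2
  have : 0 < ⟪x, x⟫ / F x := div_pos hxx (hF.pos x hx)
  linarith

end Aux

/-- Distance lower bound from a gradient bound: if `F(∇u)² ≤ λ(1 − u²)` on a convex
set `K` and `u` attains the values `−1` and `1` at `x₁, x₂ ∈ K`, then
`F⁰(x₂ − x₁) ≥ π/√λ`. -/
theorem distance_lower_bound_of_gradient_bound {n : ℕ} (hn : 1 ≤ n)
    (F : EuclideanSpace ℝ (Fin n) → ℝ) (hF : IsMinkowskiNorm F)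
    (K : Set (EuclideanSpace ℝ (Fin n))) (hK : Convex ℝ K)
    (lam : ℝ) (hlam : 0 < lam)
    (u : EuclideanSpace ℝ (Fin n) → ℝ)
    (V : Set (EuclideanSpace ℝ (Fin n))) (hV : IsOpen V) (hKV : K ⊆ V)
    (hu : ContDiffOn ℝ 1 u V)
    (hgrad : ∀ x ∈ K, F (gradient u x) ^ 2 ≤ lam * (1 - u x ^ 2))
    (x₁ x₂ : EuclideanSpace ℝ (Fin n)) (hx₁ : x₁ ∈ K) (hx₂ : x₂ ∈ K)
    (hu₁ : u x₁ = -1) (hu₂ : u x₂ = 1) :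
    π / Real.sqrt lam ≤ dualNorm F (x₂ - x₁) := by
  classical
  set v := x₂ - x₁ with hv
  have hvne : v ≠ 0 := by
    intro h
    have hx : x₁ = x₂ := by
      have := sub_eq_zero.1 h; exact this.symm
    rw [hx, hu₂] at hu₁; norm_num at hu₁
  set D := dualNorm F v with hD
  have hDpos : 0 < D := dualNorm_pos hn hF hvne
  set M := Real.sqrt lam * D with hM
  have hMnn : 0 ≤ M := mul_nonneg (Real.sqrt_nonneg _) hDpos.le
  set γ : ℝ → EuclideanSpace ℝ (Fin n) := fun t => x₁ + t • v with hγdef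
  have hγK : ∀ t ∈ Set.Icc (0:ℝ) 1, γ t ∈ K := fun t ht =>
    hK.add_smul_sub_mem hx₁ hx₂ ht
  set g : ℝ → ℝ := fun t => u (γ t) with hgdef
  have hγcont : Continuous γ := by
    exact continuous_const.add (continuous_id.smul continuous_const)
  have hgcont : ContinuousOn g (Set.Icc 0 1) := by
    refine hu.continuousOn.comp hγcont.continuousOn ?_
    intro t ht; exact hKV (hγK t ht)
  -- derivative of g
  have hderiv : ∀ t, γ t ∈ K → HasDerivAt g ⟪gradient u (γ t), v⟫ t := by
    intro t ht
    have hVmem : V ∈ nhds (γ t) := hV.mem_nhds (hKV ht)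
    have hdiff : DifferentiableAt ℝ u (γ t) :=
      ((hu.differentiableOn one_ne_zero).differentiableAt hVmem)
    have hfd : HasFDerivAt u (fderiv ℝ u (γ t)) (γ t) := hdiff.hasFDerivAt
    have hγd : HasDerivAt γ v t := by
      have h1 : HasDerivAt (fun s : ℝ => s • v) ((1:ℝ) • v) t :=
        (hasDerivAt_id t).smul_const v
      have h2 := h1.const_add x₁
      rw [one_smul] at h2
      exact h2
    have hcomp := hfd.comp_hasDerivAt t hγd
    have heq : ⟪gradient u (γ t), v⟫ = fderiv ℝ u (γ t) v := by
      rw [gradient]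
      exact InnerProductSpace.toDual_symm_apply
    rw [heq]
    exact hcomp
  -- key bound
  have hbound : ∀ t ∈ Set.Icc (0:ℝ) 1,
      ⟪gradient u (γ t), v⟫ ≤ M * Real.sqrt (1 - g t ^ 2) := by
    intro t ht
    have hKt := hγK t ht
    have hCS : ⟪v, gradient u (γ t)⟫ ≤ D * F (gradient u (γ t)) :=
      dualNorm_CS hn hF v (gradient u (γ t))
    have hgr := hgrad _ hKt
    have h0 := hF.nonneg (gradient u (γ t))
    have hXnn : 0 ≤ lam * (1 - g t ^ 2) := le_trans (sq_nonneg _) hgr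
    have hFle : F (gradient u (γ t)) ≤ Real.sqrt (lam * (1 - g t ^ 2)) := by
      have := Real.sqrt_le_sqrt hgr
      rwa [Real.sqrt_sq h0] at this
    have hsqrt : Real.sqrt (lam * (1 - g t ^ 2)) =
        Real.sqrt lam * Real.sqrt (1 - g t ^ 2) := Real.sqrt_mul hlam.le _
    calc ⟪gradient u (γ t), v⟫ = ⟪v, gradient u (γ t)⟫ := real_inner_comm _ _
    _ ≤ D * F (gradient u (γ t)) := hCS
    _ ≤ D * (Real.sqrt lam * Real.sqrt (1 - g t ^ 2)) := by
        rw [← hsqrt]; exact mul_le_mul_of_nonneg_left hFle hDpos.le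
    _ = M * Real.sqrt (1 - g t ^ 2) := by rw [hM]; ring
  -- the sets for a and b
  set T : Set ℝ := Set.Icc (0:ℝ) 1 ∩ g ⁻¹' {1} with hT
  have hTne : T.Nonempty := by
    refine ⟨1, ⟨by norm_num, by norm_num⟩, ?_⟩
    show g 1 = 1
    simp only [hgdef, hγdef, hv, one_smul]
    rw [add_sub_cancel]
    exact hu₂
  have hTclosed : IsClosed T :=
    hgcont.preimage_isClosed_of_isClosed isClosed_Icc isClosed_singleton
  have hTbdd : BddBelow T := BddBelow.mono Set.inter_subset_left bddBelow_Icc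
  set b := sInf T with hb
  have hbT : b ∈ T := hTclosed.csInf_mem hTne hTbdd
  have hb01 : b ∈ Set.Icc (0:ℝ) 1 := hbT.1
  have hgb : g b = 1 := hbT.2
  set A : Set ℝ := Set.Icc (0:ℝ) b ∩ g ⁻¹' {-1} with hA
  have hg0 : g 0 = -1 := by simp [hgdef, hγdef, hu₁]
  have hAne : A.Nonempty := ⟨0, ⟨le_refl 0, hb01.1⟩, hg0⟩
  have hAbdd : BddAbove A := BddAbove.mono Set.inter_subset_left bddAbove_Icc
  have hgcontb : ContinuousOn g (Set.Icc 0 b) :=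
    hgcont.mono (Set.Icc_subset_Icc le_rfl hb01.2)
  have hAclosed : IsClosed A :=
    hgcontb.preimage_isClosed_of_isClosed isClosed_Icc isClosed_singleton
  set a := sSup A with ha
  have haA : a ∈ A := hAclosed.csSup_mem hAne hAbdd
  have ha0b : a ∈ Set.Icc (0:ℝ) b := haA.1
  have hga : g a = -1 := haA.2
  have hab : a < b := by
    rcases lt_or_eq_of_le ha0b.2 with h | h
    · exact h
    · exfalso; rw [h, hgb] at hga; norm_num at hga
  have hasub : Set.Icc a b ⊆ Set.Icc (0:ℝ) 1 :=
    Set.Icc_subset_Icc ha0b.1 hb01.2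
  -- on (a,b), g stays in (-1,1)
  have hgIoo : ∀ t ∈ Set.Ioo a b, g t ∈ Set.Ioo (-1:ℝ) 1 := by
    intro t ht
    constructor
    · by_contra hle
      push_neg at hle
      -- g t ≤ -1 ≤ g b, so ∃ s ∈ [t,b], g s = -1
      have hcont' : ContinuousOn g (Set.Icc t b) :=
        hgcont.mono (Set.Icc_subset_Icc (hasub ⟨ht.1.le, ht.2.le⟩).1 hb01.2)
      have hmem : (-1:ℝ) ∈ Set.Icc (g t) (g b) := ⟨hle, by rw [hgb]; norm_num⟩
      obtain ⟨s, hs, hgs⟩ := intermediate_value_Icc ht.2.le hcont' hmem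
      have hsA : s ∈ A := ⟨⟨le_trans ha0b.1 (le_trans ht.1.le hs.1), hs.2⟩, hgs⟩
      have : s ≤ a := le_csSup hAbdd hsA
      have : a < a := lt_of_lt_of_le (lt_of_lt_of_le ht.1 hs.1) this
      exact lt_irrefl a this
    · by_contra hle
      push_neg at hle
      have hcont' : ContinuousOn g (Set.Icc a t) :=
        hgcont.mono (Set.Icc_subset_Icc ha0b.1 (hasub ⟨ht.1.le, ht.2.le⟩).2)
      have hmem : (1:ℝ) ∈ Set.Icc (g a) (g t) := ⟨by rw [hga]; norm_num, hle⟩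
      obtain ⟨s, hs, hgs⟩ := intermediate_value_Icc ht.1.le hcont' hmem
      have hsT : s ∈ T := ⟨⟨le_trans ha0b.1 hs.1,
        le_trans hs.2 (le_trans ht.2.le hb01.2)⟩, hgs⟩
      have : b ≤ s := csInf_le hTbdd hsT
      have : b < b := lt_of_le_of_lt (le_trans this hs.2) ht.2
      exact lt_irrefl b this
  -- the comparison function
  set h : ℝ → ℝ := fun t => M * t - Real.arcsin (g t) with hhdef
  have hhasDeriv : ∀ t ∈ Set.Ioo a b,
      HasDerivAt h (M - 1 / Real.sqrt (1 - g t ^ 2) * ⟪gradient u (γ t), v⟫) t := by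
    intro t ht
    have hgt := hgIoo t ht
    have hne1 : g t ≠ -1 := ne_of_gt hgt.1
    have hne2 : g t ≠ 1 := ne_of_lt hgt.2
    have ht01 : t ∈ Set.Icc (0:ℝ) 1 := hasub ⟨ht.1.le, ht.2.le⟩
    have hgd : HasDerivAt g ⟪gradient u (γ t), v⟫ t := hderiv t (hγK t ht01)
    have harc : HasDerivAt Real.arcsin (1 / Real.sqrt (1 - g t ^ 2)) (g t) :=
      Real.hasDerivAt_arcsin hne1 hne2
    have hcomp : HasDerivAt (fun s => Real.arcsin (g s))
        (1 / Real.sqrt (1 - g t ^ 2) * ⟪gradient u (γ t), v⟫) t := harc.comp t hgd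
    have hlin : HasDerivAt (fun s : ℝ => M * s) M t := by
      simpa using (hasDerivAt_id t).const_mul M
    exact hlin.sub hcomp
  have hcontab : ContinuousOn h (Set.Icc a b) := by
    refine ContinuousOn.sub ?_ ?_
    · exact (continuous_const.mul continuous_id).continuousOn
    · exact Real.continuous_arcsin.comp_continuousOn (hgcont.mono hasub)
  have hdiffab : DifferentiableOn ℝ h (interior (Set.Icc a b)) := by
    rw [interior_Icc]
    intro t ht
    exact (hhasDeriv t ht).differentiableAt.differentiableWithinAt
  have hderivnn : ∀ t ∈ interior (Set.Icc a b), 0 ≤ deriv h t := by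
    rw [interior_Icc]
    intro t ht
    have hgt := hgIoo t ht
    have hs : 0 < Real.sqrt (1 - g t ^ 2) := by
      apply Real.sqrt_pos.2
      nlinarith [hgt.1, hgt.2]
    have hd := (hhasDeriv t ht).deriv
    rw [hd]
    have ht01 : t ∈ Set.Icc (0:ℝ) 1 := hasub ⟨ht.1.le, ht.2.le⟩
    have hb' := hbound t ht01
    have : 1 / Real.sqrt (1 - g t ^ 2) * ⟪gradient u (γ t), v⟫ ≤ M := by
      rw [div_mul_eq_mul_div, one_mul, div_le_iff₀ hs]
      exact hb'
    linarith
  have hmono : MonotoneOn h (Set.Icc a b) :=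
    monotoneOn_of_deriv_nonneg (convex_Icc a b) hcontab hdiffab hderivnn
  have hineq := hmono (Set.left_mem_Icc.2 hab.le) (Set.right_mem_Icc.2 hab.le) hab.le
  simp only [hhdef, hga, hgb, Real.arcsin_one, Real.arcsin_neg_one] at hineq
  -- π ≤ M * (b - a) ≤ M
  have hπM : π ≤ M := by
    have h1 : π ≤ M * (b - a) := by nlinarith
    have h2 : M * (b - a) ≤ M * 1 := by
      apply mul_le_mul_of_nonneg_left _ hMnn
      have := ha0b.1
      have := hb01.2
      linarith
    linarith
  rw [div_le_iff₀ (Real.sqrt_pos.2 hlam)]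
  calc π ≤ M := hπM
  _ = D * Real.sqrt lam := by rw [hM]; ring
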